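/- arXiv:2005.05210 — 2 statements merged into one kernel-verified Lean document; each statement's English description precedes it below -/
import Mathlib

section
/- (Gaussian scale-mixture / group lasso equivalence, normalization constant form) Let p ≥ 1 and λ > 0. If γ² ~ Gamma((p+1)/2, λ²/2) (shape-rate parameterization) and W | γ² ~ N(0, γ² I_p) on ℝ^p, then the marginal density of W satisfies p(W) ∝ exp(−λ‖W‖₂), i.e., W has a multivariate Laplace distribution with density C_{p,λ} exp(−λ‖W‖₂) for some normalizing constant C_{p,λ} > 0. -/
open MeasureTheory Real

open Set


/-- Glasser-type integral: `∫_{0}^{∞} exp (-(B t² + A/t²)) dt`. -/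
lemma glasser_integral (A B : ℝ) (hA : 0 < A) (hB : 0 < B) :
    ∫ t in Ioi (0:ℝ), Real.exp (-(B * t ^ 2 + A / t ^ 2))
      = Real.sqrt (π / B) / 2 * Real.exp (-2 * Real.sqrt (A * B)) := by
  set α := Real.sqrt A with hα_def
  set β := Real.sqrt B with hβ_def
  have hα : 0 < α := Real.sqrt_pos.mpr hA
  have hβ : 0 < β := Real.sqrt_pos.mpr hB
  have hα2 : α ^ 2 = A := Real.sq_sqrt hA.le
  have hβ2 : β ^ 2 = B := Real.sq_sqrt hB.le
  set f : ℝ → ℝ := fun t => β * t - α / t with hf_def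
  set f' : ℝ → ℝ := fun t => β + α / t ^ 2 with hf'_def
  -- derivative
  have hderiv : ∀ t ∈ Ioi (0:ℝ), HasDerivWithinAt f (f' t) (Ioi 0) t := by
    intro t ht
    have ht0 : t ≠ 0 := (ne_of_gt ht)
    have h1 : HasDerivAt (fun t : ℝ => β * t) β t := by
      simpa using (hasDerivAt_id t).const_mul β
    have h2 : HasDerivAt (fun t : ℝ => α / t) (α * (-(t ^ 2)⁻¹)) t := by
      simpa [div_eq_mul_inv] using (hasDerivAt_inv ht0).const_mul α
    have := h1.sub h2
    have heq : β - α * (-(t ^ 2)⁻¹) = f' t := by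
      simp only [hf'_def, div_eq_mul_inv]; ring
    rw [heq] at this
    exact this.hasDerivWithinAt
  have hf'pos : ∀ t ∈ Ioi (0:ℝ), 0 < f' t := by
    intro t ht
    exact add_pos hβ (div_pos hα (pow_pos ht 2))
  -- injectivity
  have hinj : InjOn f (Ioi 0) := by
    have : StrictMonoOn f (Ioi 0) := by
      intro x hx y hy hxy
      have hx0 : (0:ℝ) < x := hx
      have hy0 : (0:ℝ) < y := hy
      have h1 : β * x < β * y := by nlinarith
      have h2 : α / y < α / x := div_lt_div_of_pos_left hα hx0 hxy
      simp only [hf_def]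
      linarith
    exact this.injOn
  -- surjectivity: image is univ
  have himg : f '' Ioi 0 = univ := by
    apply Set.eq_univ_of_forall
    intro y
    set D := Real.sqrt (y ^ 2 + 4 * α * β) with hD_def
    have hD2 : D ^ 2 = y ^ 2 + 4 * α * β := Real.sq_sqrt (by nlinarith)
    have hDnn : 0 ≤ D := Real.sqrt_nonneg _
    have hDy : -y < D := by nlinarith
    have hyD : 0 < y + D := by linarith
    have ht_pos : 0 < (y + D) / (2 * β) := div_pos hyD (by linarith)
    refine ⟨(y + D) / (2 * β), ht_pos, ?_⟩
    simp only [hf_def]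
    have h2β : (2 * β) ≠ 0 := by positivity
    field_simp [hyD.ne']
    nlinarith [hD2]
  -- the base integral I
  set I := ∫ t in Ioi (0:ℝ), Real.exp (-(f t) ^ 2) with hI_def
  -- first change of variables: √π = ∫ over image
  have hcv1 : Real.sqrt π = ∫ t in Ioi (0:ℝ), f' t * Real.exp (-(f t) ^ 2) := by
    have := integral_image_eq_integral_abs_deriv_smul measurableSet_Ioi hderiv hinj
      (fun x => Real.exp (-x ^ 2))
    rw [himg] at this
    have hg : (∫ x : ℝ, Real.exp (-x ^ 2)) = Real.sqrt π := by
      simpa using integral_gaussian 1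
    rw [← setIntegral_univ (μ := volume) (f := fun x : ℝ => Real.exp (-x ^ 2))] at hg
    rw [← hg, this]
    apply setIntegral_congr_fun measurableSet_Ioi
    intro t ht
    dsimp only
    rw [abs_of_pos (hf'pos t ht), smul_eq_mul]
  -- second change of variables: g t = α/(β t), with f ∘ g = -f
  have hcv2 : I = ∫ t in Ioi (0:ℝ), (α / β) / t ^ 2 * Real.exp (-(f t) ^ 2) := by
    set g : ℝ → ℝ := fun t => (α / β) / t with hg_def
    have hgderiv : ∀ t ∈ Ioi (0:ℝ), HasDerivWithinAt g (-((α / β) / t ^ 2)) (Ioi 0) t := by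
      intro t ht
      have ht0 : t ≠ 0 := ne_of_gt ht
      have := (hasDerivAt_inv ht0).const_mul (α / β)
      have heq : (α / β) * (-(t ^ 2)⁻¹) = -((α / β) / t ^ 2) := by
        field_simp
      rw [heq] at this
      have h2 : HasDerivAt g (-((α / β) / t ^ 2)) t := by
        simpa [hg_def, div_eq_mul_inv] using this
      exact h2.hasDerivWithinAt
    have hginj : InjOn g (Ioi 0) := by
      intro x hx y hy hxy
      have hx0 : (x:ℝ) ≠ 0 := ne_of_gt hx
      have hy0 : (y:ℝ) ≠ 0 := ne_of_gt hy
      have hab : (0:ℝ) < α / β := div_pos hα hβ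
      simp only [hg_def] at hxy
      field_simp at hxy
      exact hxy.symm
    have hgimg : g '' Ioi 0 = Ioi 0 := by
      ext y
      constructor
      · rintro ⟨t, ht, rfl⟩
        exact div_pos (div_pos hα hβ) ht
      · intro hy
        exact ⟨(α / β) / y, div_pos (div_pos hα hβ) hy, by
          simp only [hg_def]; field_simp⟩
    have := integral_image_eq_integral_abs_deriv_smul measurableSet_Ioi hgderiv hginj
      (fun x => Real.exp (-(f x) ^ 2))
    rw [hgimg] at this
    rw [hI_def, this]
    apply setIntegral_congr_fun measurableSet_Ioi
    intro t ht
    dsimp only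
    have ht0 : (t:ℝ) ≠ 0 := ne_of_gt ht
    have habs : |(-((α / β) / t ^ 2))| = (α / β) / t ^ 2 := by
      rw [abs_neg, abs_of_pos (div_pos (div_pos hα hβ) (by positivity))]
    rw [habs, smul_eq_mul]
    congr 2
    -- f (g t) ^2 = f t ^ 2
    have : f (g t) = -(f t) := by
      simp only [hf_def, hg_def]
      field_simp
      ring
    rw [this, neg_pow]
    ring_nf
  -- continuity
  have hcontf : ContinuousOn (fun t : ℝ => Real.exp (-(f t) ^ 2)) (Ioi 0) := by
    apply ContinuousOn.rexp
    apply ContinuousOn.neg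
    apply ContinuousOn.pow
    exact (continuousOn_const.mul continuousOn_id).sub
      (continuousOn_const.div continuousOn_id fun x hx => ne_of_gt hx)
  -- integrability of f' * exp(-f²)
  have hint1 : IntegrableOn (fun t => f' t * Real.exp (-(f t) ^ 2)) (Ioi 0) := by
    have hexp_int : Integrable (fun x : ℝ => Real.exp (-x ^ 2)) := by
      simpa using integrable_exp_neg_mul_sq (one_pos (α := ℝ))
    have := (integrableOn_image_iff_integrableOn_abs_deriv_smul measurableSet_Ioi hderiv hinj
      (fun x => Real.exp (-x ^ 2))).mp (by rw [himg]; exact hexp_int.integrableOn)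
    refine this.congr_fun ?_ measurableSet_Ioi
    intro t ht
    dsimp only
    rw [abs_of_pos (hf'pos t ht), smul_eq_mul]
  have hbound : IntegrableOn (fun t => β⁻¹ * (f' t * Real.exp (-(f t) ^ 2))) (Ioi 0) :=
    hint1.const_mul β⁻¹
  have hge : ∀ t ∈ Ioi (0:ℝ), β ≤ f' t := by
    intro t ht
    have := div_pos hα (pow_pos (mem_Ioi.mp ht) 2)
    simp only [hf'_def]
    linarith
  -- integrability of exp(-f²)
  have hIexp : IntegrableOn (fun t => Real.exp (-(f t) ^ 2)) (Ioi 0) := by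
    apply Integrable.mono' hbound (hcontf.aestronglyMeasurable measurableSet_Ioi)
    filter_upwards [ae_restrict_mem measurableSet_Ioi] with t ht
    have h2 : (0:ℝ) < Real.exp (-(f t) ^ 2) := Real.exp_pos _
    rw [Real.norm_eq_abs, abs_of_pos h2]
    calc Real.exp (-(f t) ^ 2) = β⁻¹ * (β * Real.exp (-(f t) ^ 2)) := by
          field_simp
      _ ≤ β⁻¹ * (f' t * Real.exp (-(f t) ^ 2)) := by
          apply mul_le_mul_of_nonneg_left
            (mul_le_mul_of_nonneg_right (hge t ht) h2.le) (by positivity)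
  -- integrability of (α/β)/t² * exp(-f²)
  have hint2 : IntegrableOn (fun t => (α / β) / t ^ 2 * Real.exp (-(f t) ^ 2)) (Ioi 0) := by
    have hcont2 : ContinuousOn (fun t : ℝ => (α / β) / t ^ 2 * Real.exp (-(f t) ^ 2)) (Ioi 0) := by
      apply ContinuousOn.mul _ hcontf
      exact continuousOn_const.div (continuousOn_id.pow 2)
        fun x hx => pow_ne_zero 2 (ne_of_gt hx)
    apply Integrable.mono' hbound (hcont2.aestronglyMeasurable measurableSet_Ioi)
    filter_upwards [ae_restrict_mem measurableSet_Ioi] with t ht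
    have ht0 : (0:ℝ) < t := ht
    have h2 : (0:ℝ) < Real.exp (-(f t) ^ 2) := Real.exp_pos _
    have h3 : (0:ℝ) < (α / β) / t ^ 2 := div_pos (div_pos hα hβ) (pow_pos ht0 2)
    rw [Real.norm_eq_abs, abs_of_pos (mul_pos h3 h2)]
    have h4 : (α / β) / t ^ 2 ≤ β⁻¹ * f' t := by
      have heq : β⁻¹ * f' t = β⁻¹ * β + (α / β) / t ^ 2 := by
        simp only [hf'_def]; ring
      rw [heq, inv_mul_cancel₀ hβ.ne']
      linarith
    calc (α / β) / t ^ 2 * Real.exp (-(f t) ^ 2)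
        ≤ β⁻¹ * f' t * Real.exp (-(f t) ^ 2) := mul_le_mul_of_nonneg_right h4 h2.le
      _ = β⁻¹ * (f' t * Real.exp (-(f t) ^ 2)) := by ring
  -- the value of I
  have hI_val : I = Real.sqrt π / (2 * β) := by
    have hsplit : (∫ t in Ioi (0:ℝ), f' t * Real.exp (-(f t) ^ 2))
        = (∫ t in Ioi (0:ℝ), β * Real.exp (-(f t) ^ 2))
          + ∫ t in Ioi (0:ℝ), β * ((α / β) / t ^ 2 * Real.exp (-(f t) ^ 2)) := by
      rw [← integral_add (hIexp.const_mul β) (hint2.const_mul β)]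
      apply setIntegral_congr_fun measurableSet_Ioi
      intro t ht
      have ht0 : (t:ℝ) ≠ 0 := ne_of_gt ht
      dsimp only
      simp only [hf'_def]
      field_simp
    rw [hsplit, integral_const_mul, integral_const_mul, ← hI_def, ← hcv2] at hcv1
    have h2β : (0:ℝ) < 2 * β := by linarith
    field_simp
    linarith
  -- final assembly
  have hfinal : ∀ t ∈ Ioi (0:ℝ), Real.exp (-(B * t ^ 2 + A / t ^ 2))
      = Real.exp (-(2 * (α * β))) * Real.exp (-(f t) ^ 2) := by
    intro t ht
    rw [← Real.exp_add]
    congr 1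
    have ht0 : (t:ℝ) ≠ 0 := ne_of_gt ht
    simp only [hf_def]
    rw [← hα2, ← hβ2]
    field_simp
    ring
  rw [setIntegral_congr_fun measurableSet_Ioi hfinal, integral_const_mul, ← hI_def, hI_val]
  have h1 : Real.sqrt (A * B) = α * β := Real.sqrt_mul hA.le B
  have h2 : Real.sqrt (π / B) = Real.sqrt π / β := Real.sqrt_div pi_pos.le B
  rw [h1, h2, show (-(2 * (α * β)) : ℝ) = -2 * (α * β) by ring]
  ring

/-- The half-line integral `∫ s^{-1/2} exp(-(Bs + A/s)) ds`. -/
lemma half_line_integral (A B : ℝ) (hA : 0 ≤ A) (hB : 0 < B) :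
    ∫ s in Ioi (0:ℝ), s ^ (-(1:ℝ)/2) * Real.exp (-(B * s + A / s))
      = Real.sqrt (π / B) * Real.exp (-2 * Real.sqrt (A * B)) := by
  have hderiv : ∀ t ∈ Ioi (0:ℝ), HasDerivWithinAt (fun t : ℝ => t ^ 2) (2 * t) (Ioi 0) t := by
    intro t ht
    simpa [mul_comm] using (hasDerivAt_pow 2 t).hasDerivWithinAt
  have hinj : InjOn (fun t : ℝ => t ^ 2) (Ioi 0) := by
    intro x hx y hy h
    dsimp at h
    nlinarith [mem_Ioi.mp hx, mem_Ioi.mp hy]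
  have himg : (fun t : ℝ => t ^ 2) '' Ioi 0 = Ioi 0 := by
    ext y; constructor
    · rintro ⟨t, ht, rfl⟩; exact pow_pos (show (0:ℝ) < t from ht) 2
    · intro hy
      exact ⟨Real.sqrt y, Real.sqrt_pos.mpr hy, Real.sq_sqrt (le_of_lt hy)⟩
  have hcv := integral_image_eq_integral_abs_deriv_smul measurableSet_Ioi hderiv hinj
    (fun s => s ^ (-(1:ℝ)/2) * Real.exp (-(B * s + A / s)))
  rw [himg] at hcv
  rw [hcv]
  have heq : ∀ t ∈ Ioi (0:ℝ),
      |2 * t| • (((t:ℝ)^2) ^ (-(1:ℝ)/2) * Real.exp (-(B * t^2 + A / t^2)))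
      = 2 * Real.exp (-(B * t^2 + A / t^2)) := by
    intro t ht
    have ht0 : (0:ℝ) < t := ht
    have h1 : ((t:ℝ) ^ 2) ^ (-(1:ℝ)/2) = t⁻¹ := by
      rw [← Real.rpow_natCast t 2, ← Real.rpow_mul ht0.le]
      rw [show ((2:ℕ):ℝ) * (-(1:ℝ)/2) = -1 by norm_num, Real.rpow_neg_one]
    rw [h1, abs_of_pos (by positivity), smul_eq_mul]
    field_simp
  rw [setIntegral_congr_fun measurableSet_Ioi heq, integral_const_mul]
  rcases eq_or_lt_of_le hA with h0 | hA'
  · rw [← h0]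
    simp only [zero_div, add_zero, zero_mul, Real.sqrt_zero, mul_zero, Real.exp_zero, mul_one]
    have : ∀ t : ℝ, Real.exp (-(B * t ^ 2)) = Real.exp (-B * t ^ 2) := by
      intro t; congr 1; ring
    simp_rw [this]
    rw [integral_gaussian_Ioi B]
    ring
  · rw [glasser_integral A B hA' hB]
    ring

/-- Gaussian scale-mixture / group lasso equivalence: if `γ² ∼ Gamma((p+1)/2, λ²/2)`
(shape–rate) and `W | γ² ∼ N(0, γ² I_p)` on `ℝ^p`, then the marginal density of `W` is
proportional to `exp(−λ‖W‖₂)`, i.e. it equals `C · exp(−λ‖W‖₂)` for some `C > 0`. -/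
theorem gaussian_gamma_mixture_is_laplace (p : ℕ) (hp : 1 ≤ p) (lam : ℝ) (hlam : 0 < lam) :
    ∃ C : ℝ, 0 < C ∧ ∀ W : EuclideanSpace ℝ (Fin p),
      (∫ s in Set.Ioi (0 : ℝ),
          (2 * Real.pi * s) ^ (-(p : ℝ) / 2) * Real.exp (-‖W‖ ^ 2 / (2 * s))
            * ((lam ^ 2 / 2) ^ (((p : ℝ) + 1) / 2) / Real.Gamma (((p : ℝ) + 1) / 2)
                * s ^ (((p : ℝ) + 1) / 2 - 1) * Real.exp (-(lam ^ 2 / 2) * s)))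
        = C * Real.exp (-lam * ‖W‖) := by
  set B : ℝ := lam ^ 2 / 2 with hB_def
  have hB : 0 < B := by positivity
  set c1 : ℝ := (lam ^ 2 / 2) ^ (((p : ℝ) + 1) / 2) / Real.Gamma (((p : ℝ) + 1) / 2) with hc1_def
  have hc1 : 0 < c1 := by
    apply div_pos (Real.rpow_pos_of_pos (by positivity) _)
    exact Real.Gamma_pos_of_pos (by positivity)
  set K : ℝ := (2 * π) ^ (-(p : ℝ) / 2) * c1 with hK_def
  have hK : 0 < K := mul_pos (Real.rpow_pos_of_pos (by positivity) _) hc1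
  refine ⟨K * Real.sqrt (π / B), mul_pos hK (Real.sqrt_pos.mpr (div_pos pi_pos hB)), ?_⟩
  intro W
  set A : ℝ := ‖W‖ ^ 2 / 2 with hA_def
  have hA : 0 ≤ A := by positivity
  have hpt : ∀ s ∈ Ioi (0:ℝ),
      (2 * Real.pi * s) ^ (-(p : ℝ) / 2) * Real.exp (-‖W‖ ^ 2 / (2 * s))
            * (c1 * s ^ (((p : ℝ) + 1) / 2 - 1) * Real.exp (-(lam ^ 2 / 2) * s))
      = K * (s ^ (-(1:ℝ)/2) * Real.exp (-(B * s + A / s))) := by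
    intro s hs
    have hs0 : (0:ℝ) < s := hs
    have e1 : Real.exp (-‖W‖ ^ 2 / (2 * s)) * Real.exp (-(lam ^ 2 / 2) * s)
        = Real.exp (-(B * s + A / s)) := by
      rw [← Real.exp_add]
      congr 1
      rw [hA_def, hB_def, div_div]
      ring
    have e2 : s ^ (-(p:ℝ)/2) * s ^ (((p:ℝ)+1)/2 - 1) = s ^ (-(1:ℝ)/2) := by
      rw [← Real.rpow_add hs0]
      congr 1
      ring
    calc (2 * Real.pi * s) ^ (-(p : ℝ) / 2) * Real.exp (-‖W‖ ^ 2 / (2 * s))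
            * (c1 * s ^ (((p : ℝ) + 1) / 2 - 1) * Real.exp (-(lam ^ 2 / 2) * s))
        = ((2 * π) ^ (-(p:ℝ)/2) * c1) * ((s ^ (-(p:ℝ)/2) * s ^ (((p:ℝ)+1)/2 - 1))
            * (Real.exp (-‖W‖ ^ 2 / (2 * s)) * Real.exp (-(lam ^ 2 / 2) * s))) := by
          rw [Real.mul_rpow (by positivity) hs0.le]
          ring
      _ = K * (s ^ (-(1:ℝ)/2) * Real.exp (-(B * s + A / s))) := by
          rw [e2, e1, hK_def]
  rw [setIntegral_congr_fun measurableSet_Ioi hpt, integral_const_mul,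
    half_line_integral A B hA hB]
  have hAB : Real.sqrt (A * B) = ‖W‖ * lam / 2 := by
    rw [show A * B = (‖W‖ * lam / 2) ^ 2 by rw [hA_def, hB_def]; ring]
    exact Real.sqrt_sq (by positivity)
  rw [hAB, show -2 * (‖W‖ * lam / 2) = -lam * ‖W‖ by ring]
  ring
end

section
/- For p ≥ 1 and λ > 0, the integral ∫₀^∞ (2πs)^{−p/2} exp(−r²/(2s)) · ((λ²/2)^{(p+1)/2}/Γ((p+1)/2)) · s^{(p+1)/2 − 1} e^{−λ² s/2} ds, as a function of r ≥ 0, equals c · exp(−λ r) for a constant c > 0 independent of r. -/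
open MeasureTheory Real Set

-- derivative of the inverse map h(u) = (u + sqrt(u^2+c))/(2 sqrt b)
lemma aux_hasDerivAt (b c : ℝ) (hb : 0 < b) (hc : 0 < c) (u : ℝ) :
    HasDerivAt (fun u : ℝ => (u + Real.sqrt (u ^ 2 + c)) / (2 * Real.sqrt b))
      ((1 + u / Real.sqrt (u ^ 2 + c)) / (2 * Real.sqrt b)) u := by
  have hpos : 0 < u ^ 2 + c := by positivity
  have hs : HasDerivAt (fun u : ℝ => Real.sqrt (u ^ 2 + c)) (u / Real.sqrt (u ^ 2 + c)) u := by
    have h1 : HasDerivAt (fun u : ℝ => u ^ 2 + c) (2 * u) u := by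
      simpa using (hasDerivAt_pow 2 u).add_const c
    have h2 := (Real.hasDerivAt_sqrt hpos.ne').comp u h1
    refine h2.congr_deriv ?_
    ring
  exact ((hasDerivAt_id u).add hs).div_const _

lemma aux_sq (A B t u : ℝ) (ht : t ≠ 0) (hu : B * t - A / t = u) :
    A ^ 2 / t ^ 2 + B ^ 2 * t ^ 2 = u ^ 2 + 2 * (A * B) := by
  subst hu
  field_simp
  ring

lemma glasser (a b : ℝ) (ha : 0 < a) (hb : 0 < b) :
    ∫ t in Ioi (0:ℝ), Real.exp (-(a / t ^ 2) - b * t ^ 2)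
      = Real.sqrt Real.pi / (2 * Real.sqrt b) * Real.exp (-(2 * Real.sqrt (a * b))) := by
  set c : ℝ := 4 * Real.sqrt (a * b) with hc_def
  have hc : 0 < c := by positivity
  set h : ℝ → ℝ := fun u => (u + Real.sqrt (u ^ 2 + c)) / (2 * Real.sqrt b) with hh
  set h' : ℝ → ℝ := fun u => (1 + u / Real.sqrt (u ^ 2 + c)) / (2 * Real.sqrt b) with hh'
  have hsb : 0 < Real.sqrt b := Real.sqrt_pos.mpr hb
  have hsa : 0 < Real.sqrt a := Real.sqrt_pos.mpr ha
  have hspos : ∀ u : ℝ, 0 < u ^ 2 + c := fun u => by positivity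
  have hd : ∀ u : ℝ, HasDerivAt h (h' u) u := fun u => aux_hasDerivAt b c hb hc u
  have habs : ∀ u : ℝ, |u| < Real.sqrt (u ^ 2 + c) := by
    intro u
    have : Real.sqrt (u ^ 2) < Real.sqrt (u ^ 2 + c) :=
      Real.sqrt_lt_sqrt (by positivity) (by linarith)
    simpa [Real.sqrt_sq_eq_abs] using this
  have hderiv_pos : ∀ u : ℝ, 0 < h' u := by
    intro u
    have h1 : -1 < u / Real.sqrt (u ^ 2 + c) := by
      rw [neg_lt, ← neg_div, div_lt_one (Real.sqrt_pos.mpr (hspos u))]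
      calc -u ≤ |u| := neg_le_abs u
        _ < _ := habs u
    have : 0 < 1 + u / Real.sqrt (u ^ 2 + c) := by linarith
    exact div_pos this (by positivity)
  have hmono : StrictMono h :=
    strictMono_of_deriv_pos (fun u => by rw [(hd u).deriv]; exact hderiv_pos u)
  -- the inverse relation: for t = h u, we have sqrt b * t - sqrt a / t = u
  have hinv : ∀ u : ℝ, Real.sqrt b * h u - Real.sqrt a / h u = u := by
    intro u
    set t := h u with ht_def
    have ht : 0 < t := by
      have : -u ≤ |u| := neg_le_abs u
      have h2 := habs u
      have : 0 < u + Real.sqrt (u ^ 2 + c) := by linarith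
      exact div_pos this (by positivity)
    have hsq : Real.sqrt (u ^ 2 + c) = 2 * Real.sqrt b * t - u := by
      have : t * (2 * Real.sqrt b) = u + Real.sqrt (u ^ 2 + c) := by
        rw [ht_def, hh]
        field_simp
      linarith [this]
    have hsq2 : u ^ 2 + c = (2 * Real.sqrt b * t - u) ^ 2 := by
      rw [← hsq, Real.sq_sqrt (hspos u).le]
    have hb' : Real.sqrt b ^ 2 = b := Real.sq_sqrt hb.le
    have hab : Real.sqrt (a * b) = Real.sqrt a * Real.sqrt b :=
      Real.sqrt_mul ha.le b
    -- expand: c = 4 b t^2 - 4 sqrt b t u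
    have key : Real.sqrt a * Real.sqrt b = Real.sqrt b * t * (Real.sqrt b * t - u) := by
      have : c = 4 * (b * t ^ 2) - 4 * (Real.sqrt b * t * u) := by nlinarith [hsq2, hb']
      rw [hab] at hc_def
      nlinarith [this, hb']
    have : Real.sqrt a = t * (Real.sqrt b * t - u) := by
      have := mul_left_cancel₀ hsb.ne' (by linarith [key] : Real.sqrt b * Real.sqrt a = Real.sqrt b * (t * (Real.sqrt b * t - u)))
      exact this
    field_simp
    nlinarith [this]
  have himg : h '' univ = Ioi (0:ℝ) := by
    apply Subset.antisymm
    · rintro x ⟨u, -, rfl⟩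
      have : -u ≤ |u| := neg_le_abs u
      have h2 := habs u
      have : 0 < u + Real.sqrt (u ^ 2 + c) := by linarith
      exact div_pos this (by positivity)
    · rintro t (ht : 0 < t)
      refine ⟨Real.sqrt b * t - Real.sqrt a / t, mem_univ _, ?_⟩
      set u := Real.sqrt b * t - Real.sqrt a / t with hu
      have hb' : Real.sqrt b ^ 2 = b := Real.sq_sqrt hb.le
      have ha' : Real.sqrt a ^ 2 = a := Real.sq_sqrt ha.le
      have hab : Real.sqrt (a * b) = Real.sqrt a * Real.sqrt b :=
        Real.sqrt_mul ha.le b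
      have hkey : u ^ 2 + c = (Real.sqrt b * t + Real.sqrt a / t) ^ 2 := by
        rw [hc_def, hab, hu]
        field_simp
        ring
      have hsq : Real.sqrt (u ^ 2 + c) = Real.sqrt b * t + Real.sqrt a / t := by
        rw [hkey]
        exact Real.sqrt_sq (by positivity)
      rw [hh]
      simp only []
      rw [hsq, hu]
      field_simp
      ring
  have hb' : Real.sqrt b ^ 2 = b := Real.sq_sqrt hb.le
  have ha' : Real.sqrt a ^ 2 = a := Real.sq_sqrt ha.le
  have hab : Real.sqrt (a * b) = Real.sqrt a * Real.sqrt b := Real.sqrt_mul ha.le b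
  have hhpos : ∀ u : ℝ, 0 < h u := by
    intro u
    have h1 : -u ≤ |u| := neg_le_abs u
    have h2 := habs u
    have : 0 < u + Real.sqrt (u ^ 2 + c) := by linarith
    exact div_pos this (by positivity)
  have hchg := integral_image_eq_integral_abs_deriv_smul MeasurableSet.univ
      (fun x _ => (hd x).hasDerivWithinAt) hmono.injective.injOn
      (fun t => Real.exp (-(a / t ^ 2) - b * t ^ 2))
  rw [himg] at hchg
  rw [hchg, setIntegral_univ]
  have hpt : ∀ u : ℝ, |h' u| • Real.exp (-(a / (h u) ^ 2) - b * (h u) ^ 2)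
      = (h' u * Real.exp (-u ^ 2)) * Real.exp (-(2 * Real.sqrt (a * b))) := by
    intro u
    have ht : 0 < h u := hhpos u
    have hu' : Real.sqrt b * h u - Real.sqrt a / h u = u := hinv u
    have e : a / (h u) ^ 2 + b * (h u) ^ 2 = u ^ 2 + 2 * Real.sqrt (a * b) := by
      have h2 := aux_sq (Real.sqrt a) (Real.sqrt b) (h u) u ht.ne' hu'
      rw [ha', hb'] at h2
      rw [hab]
      linarith
    rw [abs_of_pos (hderiv_pos u), smul_eq_mul,
      show -(a / (h u) ^ 2) - b * (h u) ^ 2 = -u ^ 2 + -(2 * Real.sqrt (a * b)) by linarith,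
      Real.exp_add]
    ring
  simp_rw [hpt, integral_mul_const]
  have hsplit : ∀ u : ℝ, h' u * Real.exp (-u ^ 2)
      = (Real.exp (-u ^ 2) + u / Real.sqrt (u ^ 2 + c) * Real.exp (-u ^ 2)) * (2 * Real.sqrt b)⁻¹ := by
    intro u
    have h1 : h' u = (1 + u / Real.sqrt (u ^ 2 + c)) / (2 * Real.sqrt b) := rfl
    rw [h1]
    ring
  have I1 : Integrable (fun u : ℝ => Real.exp (-u ^ 2)) := by
    simpa using integrable_exp_neg_mul_sq (one_pos)
  have contq : Continuous (fun u : ℝ => u / Real.sqrt (u ^ 2 + c)) := by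
    apply continuous_id.div (Real.continuous_sqrt.comp ((continuous_pow 2).add continuous_const))
    intro u
    exact (Real.sqrt_pos.mpr (hspos u)).ne'
  have I2 : Integrable (fun u : ℝ => u / Real.sqrt (u ^ 2 + c) * Real.exp (-u ^ 2)) := by
    refine I1.mono ((contq.mul (Real.continuous_exp.comp (continuous_pow 2).neg)).aestronglyMeasurable)
      (ae_of_all _ fun u => ?_)
    rw [norm_mul]
    have h1 : ‖u / Real.sqrt (u ^ 2 + c)‖ ≤ 1 := by
      rw [Real.norm_eq_abs, abs_div, abs_of_pos (Real.sqrt_pos.mpr (hspos u)),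
        div_le_one (Real.sqrt_pos.mpr (hspos u))]
      exact (habs u).le
    calc ‖u / Real.sqrt (u ^ 2 + c)‖ * ‖Real.exp (-u ^ 2)‖
        ≤ 1 * ‖Real.exp (-u ^ 2)‖ := by gcongr
      _ = ‖Real.exp (-u ^ 2)‖ := one_mul _
  have hodd : ∫ u : ℝ, u / Real.sqrt (u ^ 2 + c) * Real.exp (-u ^ 2) = 0 := by
    set f2 : ℝ → ℝ := fun u => u / Real.sqrt (u ^ 2 + c) * Real.exp (-u ^ 2) with hf2
    have hneg : ∀ u : ℝ, f2 (-u) = - f2 u := by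
      intro u
      simp only [hf2, neg_sq, neg_div]
      ring
    have h0 : ∫ u : ℝ, f2 (-u) = ∫ u : ℝ, f2 u := integral_neg_eq_self f2 volume
    simp_rw [hneg, integral_neg] at h0
    linarith
  have hgauss : ∫ u : ℝ, Real.exp (-u ^ 2) = Real.sqrt Real.pi := by
    simpa using integral_gaussian 1
  simp_rw [hsplit, integral_mul_const, integral_add I1 I2, hodd, hgauss, add_zero]
  rw [div_eq_mul_inv]

lemma mix_integral (a b : ℝ) (ha : 0 ≤ a) (hb : 0 < b) :
    ∫ s in Ioi (0:ℝ), s ^ (-(1:ℝ)/2) * Real.exp (-(a / s) - b * s)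
      = Real.sqrt Real.pi / Real.sqrt b * Real.exp (-(2 * Real.sqrt (a * b))) := by
  rcases eq_or_lt_of_le ha with rfl | ha'
  · have h0 : ∀ s ∈ Ioi (0:ℝ),
        s ^ (-(1:ℝ)/2) * Real.exp (-((0:ℝ) / s) - b * s)
          = s ^ ((1:ℝ)/2 - 1) * Real.exp (-(b * s)) := by
      intro s hs
      norm_num
    rw [setIntegral_congr_fun measurableSet_Ioi h0,
      Real.integral_rpow_mul_exp_neg_mul_Ioi one_half_pos hb, Real.Gamma_one_half_eq]
    have e1 : ((1:ℝ)/b) ^ ((1:ℝ)/2) = 1 / Real.sqrt b := by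
      rw [← Real.sqrt_eq_rpow, one_div, Real.sqrt_inv, one_div]
    rw [e1]
    simp [Real.exp_zero]
    ring
  · have hsub := MeasureTheory.integral_comp_rpow_Ioi
      (fun s : ℝ => s ^ (-(1:ℝ)/2) * Real.exp (-(a / s) - b * s)) (two_ne_zero (α := ℝ))
    rw [← hsub]
    have h1 : ∀ x ∈ Ioi (0:ℝ),
        (|(2:ℝ)| * x ^ ((2:ℝ) - 1)) •
            ((x ^ (2:ℝ)) ^ (-(1:ℝ)/2) * Real.exp (-(a / x ^ (2:ℝ)) - b * x ^ (2:ℝ)))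
          = 2 * Real.exp (-(a / x ^ 2) - b * x ^ 2) := by
      intro x hx
      have hx0 : (0:ℝ) < x := hx
      have e1 : x ^ ((2:ℝ)) = x ^ 2 := by
        rw [← Real.rpow_natCast x 2]; norm_num
      have e2 : (x ^ (2:ℝ)) ^ (-(1:ℝ)/2) = x⁻¹ := by
        rw [← Real.rpow_mul hx0.le]
        norm_num
        exact Real.rpow_neg_one x
      have e3 : x ^ ((2:ℝ) - 1) = x := by
        norm_num
      rw [e2, e3, e1, smul_eq_mul, abs_of_nonneg (by norm_num : (0:ℝ) ≤ 2)]
      field_simp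
    rw [setIntegral_congr_fun measurableSet_Ioi h1, integral_const_mul, glasser a b ha' hb]
    have hsbne : Real.sqrt b ≠ 0 := (Real.sqrt_pos.mpr hb).ne'
    field_simp

/-- Scalar form of the Gaussian–Gamma scale-mixture identity: as a function of `r ≥ 0`,
the integral over the variance `s` of the `ℝ^p` Gaussian normalizing kernel times the
`Gamma((p+1)/2, λ²/2)` density equals `c · exp(−λ r)` for a constant `c > 0`. -/
theorem gaussian_gamma_scalar_mixture (p : ℕ) (hp : 1 ≤ p) (lam : ℝ) (hlam : 0 < lam) :
    ∃ c : ℝ, 0 < c ∧ ∀ r : ℝ, 0 ≤ r →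
      (∫ s in Set.Ioi (0 : ℝ),
          (2 * Real.pi * s) ^ (-(p : ℝ) / 2) * Real.exp (-r ^ 2 / (2 * s))
            * ((lam ^ 2 / 2) ^ (((p : ℝ) + 1) / 2) / Real.Gamma (((p : ℝ) + 1) / 2))
            * s ^ (((p : ℝ) + 1) / 2 - 1) * Real.exp (-lam ^ 2 * s / 2))
        = c * Real.exp (-lam * r) := by
  set K : ℝ := (2 * Real.pi) ^ (-(p : ℝ) / 2)
      * ((lam ^ 2 / 2) ^ (((p : ℝ) + 1) / 2) / Real.Gamma (((p : ℝ) + 1) / 2)) with hK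
  have hg : 0 < Real.Gamma (((p : ℝ) + 1) / 2) :=
    Real.Gamma_pos_of_pos (by positivity)
  have hKpos : 0 < K := by
    apply mul_pos (Real.rpow_pos_of_pos (by positivity) _)
    exact div_pos (Real.rpow_pos_of_pos (by positivity) _) hg
  refine ⟨K * (Real.sqrt Real.pi / Real.sqrt (lam ^ 2 / 2)), ?_, ?_⟩
  · have : (0:ℝ) < Real.sqrt (lam ^ 2 / 2) := Real.sqrt_pos.mpr (by positivity)
    have hπ : (0:ℝ) < Real.sqrt Real.pi := Real.sqrt_pos.mpr Real.pi_pos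
    positivity
  · intro r hr
    have hcong : ∀ s ∈ Ioi (0:ℝ),
        (2 * Real.pi * s) ^ (-(p : ℝ) / 2) * Real.exp (-r ^ 2 / (2 * s))
            * ((lam ^ 2 / 2) ^ (((p : ℝ) + 1) / 2) / Real.Gamma (((p : ℝ) + 1) / 2))
            * s ^ (((p : ℝ) + 1) / 2 - 1) * Real.exp (-lam ^ 2 * s / 2)
          = K * (s ^ (-(1:ℝ)/2) * Real.exp (-(r ^ 2 / 2 / s) - lam ^ 2 / 2 * s)) := by
      intro s hs
      have hs0 : (0:ℝ) < s := hs
      have hA : -r ^ 2 / (2 * s) = -(r ^ 2 / 2 / s) := by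
        field_simp
      have hB : -lam ^ 2 * s / 2 = -(lam ^ 2 / 2 * s) := by ring
      rw [Real.mul_rpow (by positivity) hs0.le, hA, hB, hK]
      have hpow : s ^ (-(p : ℝ) / 2) * s ^ (((p : ℝ) + 1) / 2 - 1) = s ^ (-(1:ℝ)/2) := by
        rw [← Real.rpow_add hs0]
        norm_num
        ring_nf
      have hexp : Real.exp (-(r ^ 2 / 2 / s)) * Real.exp (-(lam ^ 2 / 2 * s))
          = Real.exp (-(r ^ 2 / 2 / s) - lam ^ 2 / 2 * s) := by
        rw [← Real.exp_add]
        ring_nf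
      calc (2 * Real.pi) ^ (-(p : ℝ) / 2) * s ^ (-(p : ℝ) / 2) * Real.exp (-(r ^ 2 / 2 / s))
            * ((lam ^ 2 / 2) ^ (((p : ℝ) + 1) / 2) / Real.Gamma (((p : ℝ) + 1) / 2))
            * s ^ (((p : ℝ) + 1) / 2 - 1) * Real.exp (-(lam ^ 2 / 2 * s))
          = ((2 * Real.pi) ^ (-(p : ℝ) / 2)
              * ((lam ^ 2 / 2) ^ (((p : ℝ) + 1) / 2) / Real.Gamma (((p : ℝ) + 1) / 2)))
            * ((s ^ (-(p : ℝ) / 2) * s ^ (((p : ℝ) + 1) / 2 - 1))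
              * (Real.exp (-(r ^ 2 / 2 / s)) * Real.exp (-(lam ^ 2 / 2 * s)))) := by ring
        _ = _ := by rw [hpow, hexp]
    rw [setIntegral_congr_fun measurableSet_Ioi hcong, integral_const_mul,
      mix_integral (r ^ 2 / 2) (lam ^ 2 / 2) (by positivity) (by positivity)]
    have hsq : r ^ 2 / 2 * (lam ^ 2 / 2) = (r * lam / 2) ^ 2 := by ring
    rw [hsq, Real.sqrt_sq (by positivity)]
    have : -(2 * (r * lam / 2)) = -lam * r := by ring
    rw [this]
    ring
end
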